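/- Let k > 0 and let w_k be the unique real number w with -1 ≤ w < 0 satisfying w·exp(w) = -(k+1)·exp(-(k+1)). If 1 < v ≤ exp(w_k + k + 1), then v - k - 1 ≤ v - (ln v)/(1 - 1/v) ≤ v - 1; that is, the Region-2 local maximizer p2 = v - (ln v)/(1 - 1/v) lies in Region 2 (the price interval [v - k - 1, v - 1]). -/

import Mathlib

/-- If `1 < v ≤ exp(w_k + k + 1)`, then the Region-2 local maximizer
`p2 = v - (ln v)/(1 - 1/v)` lies in the Region-2 price interval
`[v - k - 1, v - 1]`. -/
theorem stmt11 (k w v : ℝ) (hk : 0 < k) (hw1 : -1 ≤ w) (hw2 : w < 0)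
    (hwe : w * Real.exp w = -(k + 1) * Real.exp (-(k + 1)))
    (hv : 1 < v) (hv2 : v ≤ Real.exp (w + k + 1)) :
    v - k - 1 ≤ v - Real.log v / (1 - 1 / v) ∧
    v - Real.log v / (1 - 1 / v) ≤ v - 1 := by
  have hv0 : 0 < v := lt_trans one_pos hv
  have hd : 0 < 1 - 1 / v := by
    have : 1 / v < 1 := by rw [div_lt_one hv0]; exact hv
    linarith
  set t := Real.log v with ht
  have ht0 : 0 < t := Real.log_pos hv
  set T := w + k + 1 with hT
  have hT0 : 0 < T := by simp only [hT]; linarith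
  have htT : t ≤ T := by
    have h := Real.log_le_log hv0 hv2
    rwa [Real.log_exp] at h
  have hinv : 1 / v = Real.exp (-t) := by
    rw [Real.exp_neg, ht, Real.exp_log hv0, one_div]
  have hk1 : (0:ℝ) < k + 1 := by linarith
  have hwT : (k + 1) * Real.exp (-T) = -w := by
    have he : Real.exp (-T) = Real.exp (-(k + 1)) * Real.exp (-w) := by
      rw [← Real.exp_add, hT]; ring_nf
    have h2 : Real.exp w * Real.exp (-w) = 1 := by
      rw [← Real.exp_add]; simp
    rw [he]
    nlinarith [Real.exp_pos (-w), Real.exp_pos w]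
  have hE : Real.exp (-T) = -w / (k + 1) := by
    field_simp
    linarith [hwT]
  have hb0 : 0 ≤ t / T := by positivity
  have hcx := convexOn_exp.2 (Set.mem_univ (0:ℝ)) (Set.mem_univ (-T))
    (by
      have : t / T ≤ 1 := by rw [div_le_one hT0]; exact htT
      linarith : (0:ℝ) ≤ 1 - t / T) hb0 (by ring)
  have harg : (1 - t / T) • (0:ℝ) + (t / T) • (-T) = -t := by
    have hT' : T ≠ 0 := ne_of_gt hT0
    field_simp
    simp only [smul_eq_mul]; field_simp
    ring
  rw [harg] at hcx
  simp only [smul_eq_mul, Real.exp_zero, mul_one] at hcx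
  have key : t ≤ (k + 1) * (1 - 1 / v) := by
    rw [hinv]
    have h1 : (k + 1) * Real.exp (-t) ≤ (k + 1) * ((1 - t / T) + (t / T) * Real.exp (-T)) :=
      mul_le_mul_of_nonneg_left hcx (le_of_lt hk1)
    have h2 : (k + 1) * ((1 - t / T) + (t / T) * Real.exp (-T)) = (k + 1) - t := by
      rw [hE]
      have hT' : T ≠ 0 := ne_of_gt hT0
      have hk' : (k:ℝ) + 1 ≠ 0 := ne_of_gt hk1
      field_simp
      ring_nf
      rw [hT]; ring
    nlinarith
  constructor
  · have h : t / (1 - 1 / v) ≤ k + 1 := by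
      rw [div_le_iff₀ hd]; linarith [key]
    linarith
  · have hlog : 1 - 1 / v ≤ t := by
      have h := Real.log_le_sub_one_of_pos (show (0:ℝ) < 1 / v by positivity)
      rw [Real.log_div one_ne_zero (ne_of_gt hv0), Real.log_one] at h
      linarith
    have h : 1 ≤ t / (1 - 1 / v) := (one_le_div hd).2 hlog
    linarith
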